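/- Let G = C(α_1,…,α_{2k}) be a C-graph on n = α_1 + ⋯ + α_{2k} vertices with adjacency matrix A, and let Ψ(x) = det(xI − A) and Ψ_π(x) = det(xI − Q_π(G)) be the characteristic polynomials of A and of the quotient matrix Q_π(G). Then Ψ(x) = x^{∑_{i=1}^{k}(α_{2i} − 1)} · (x + 1)^{∑_{i=1}^{k}(α_{2i−1} − 1)} · Ψ_π(x). -/

import Mathlib

open Matrix BigOperators
open scoped Classical

/-- The equivalence splitting off the last cell of `Σ j : Fin (m+1), Fin (α j)`. -/
def splitLast (α : ℕ → ℕ) (m : ℕ) :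
    (Σ j : Fin (m + 1), Fin (α j.val)) ≃ (Σ j : Fin m, Fin (α j.val)) ⊕ Fin (α m) where
  toFun x :=
    if h : x.1.val < m then Sum.inl ⟨⟨x.1.val, h⟩, x.2⟩
    else Sum.inr (Fin.cast (congrArg α
      (Nat.le_antisymm (Nat.lt_succ_iff.mp x.1.isLt) (Nat.le_of_not_lt h))) x.2)
  invFun x :=
    match x with
    | Sum.inl y => ⟨⟨y.1.val, Nat.lt_succ_of_lt y.1.isLt⟩, y.2⟩
    | Sum.inr a => ⟨⟨m, Nat.lt_succ_self m⟩, a⟩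
  left_inv := by
    rintro ⟨⟨jv, hj⟩, a⟩
    by_cases h : jv < m
    · simp [h]
    · have hm : jv = m := Nat.le_antisymm (Nat.lt_succ_iff.mp hj) (Nat.le_of_not_lt h)
      subst hm
      simp [h, Fin.cast]
  right_inv := by
    rintro (⟨⟨jv, hj⟩, a⟩ | a)
    · simp [hj]
    · simp [Fin.cast]

/-- The cograph `C(α 0, α 1, …, α (m-1))` (1-indexed in the paper: `C(α_1,…,α_m)`),
defined recursively: `C(α_1)` is the complement of the complete graph `K_{α_1}`, and
`C(α_1,…,α_i)` is the complement of the disjoint union of `C(α_1,…,α_{i-1})` and `K_{α_i}`.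
The vertices added at step `j` (the cell `C_j`) are the pairs `⟨j, a⟩`. -/
def cographC (α : ℕ → ℕ) : (m : ℕ) → SimpleGraph (Σ j : Fin m, Fin (α j.val))
  | 0 => ⊥
  | m + 1 =>
      SimpleGraph.comap (splitLast α m)
        ((cographC α m ⊕g (⊤ : SimpleGraph (Fin (α m))))ᶜ)

/-- The real adjacency matrix of a finite simple graph. -/
noncomputable def adjMat {V : Type*} [Fintype V] (G : SimpleGraph V) : Matrix V V ℝ :=
  Matrix.of fun u v => if G.Adj u v then (1 : ℝ) else 0

/-- The quotient matrix `Q_π(G)` of the C-graph `C(α 0, …, α (2k-1))`.  Rows and columns are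
indexed by `Fin (2*k)`; the paper's 1-based index `i` corresponds to `i.val + 1` here. -/
def quotientMatrix (α : ℕ → ℕ) (k : ℕ) : Matrix (Fin (2 * k)) (Fin (2 * k)) ℝ :=
  Matrix.of fun i j =>
    if i = j then (if Odd (i.val + 1) then (α i.val : ℝ) - 1 else 0)
    else if (Even (i.val + 1) ∧ j.val < i.val) ∨ (Even (j.val + 1) ∧ i.val < j.val)
      then (α j.val : ℝ) else 0


-- adjacency characterization development
lemma sigma_mk_eq_iff {α : ℕ → ℕ} {m : ℕ} {i j : Fin m} {a : Fin (α i.val)} {b : Fin (α j.val)} :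
    (⟨i, a⟩ : Σ j : Fin m, Fin (α j.val)) = ⟨j, b⟩ ↔ i.val = j.val ∧ a.val = b.val := by
  constructor
  · intro h
    cases h
    exact ⟨rfl, rfl⟩
  · rintro ⟨h1, h2⟩
    have hij : i = j := Fin.ext h1
    subst hij
    have hab : a = b := Fin.ext h2
    subst hab
    rfl

lemma cographC_adj (α : ℕ → ℕ) : ∀ (m : ℕ) (i j : Fin m) (a : Fin (α i.val)) (b : Fin (α j.val)),
    (cographC α m).Adj ⟨i, a⟩ ⟨j, b⟩ ↔
      (i.val = j.val ∧ a.val ≠ b.val ∧ Even (m + i.val)) ∨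
      (i.val ≠ j.val ∧ Odd (m + max i.val j.val)) := by
  intro m
  induction m with
  | zero => exact fun i => i.elim0
  | succ m ih =>
    intro i j a b
    show (SimpleGraph.comap (splitLast α m) ((cographC α m ⊕g (⊤ : SimpleGraph (Fin (α m))))ᶜ)).Adj
        ⟨i, a⟩ ⟨j, b⟩ ↔ _
    rw [SimpleGraph.comap_adj]
    by_cases hi : i.val < m <;> by_cases hj : j.val < m
    · -- both in old part
      have hsx : splitLast α m ⟨i, a⟩ = Sum.inl ⟨⟨i.val, hi⟩, a⟩ := by simp [splitLast, hi]
      have hsy : splitLast α m ⟨j, b⟩ = Sum.inl ⟨⟨j.val, hj⟩, b⟩ := by simp [splitLast, hj]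
      rw [hsx, hsy, SimpleGraph.compl_adj]
      simp only [SimpleGraph.sum_adj, ih, ne_eq, Sum.inl.injEq, sigma_mk_eq_iff]
      simp only [Nat.even_iff, Nat.odd_iff, Fin.val_mk]
      omega
    · -- i old, j last
      have hjm : j.val = m := by omega
      have hsx : splitLast α m ⟨i, a⟩ = Sum.inl ⟨⟨i.val, hi⟩, a⟩ := by simp [splitLast, hi]
      have hsy : ∃ b', splitLast α m ⟨j, b⟩ = Sum.inr b' := by
        simp only [splitLast, Equiv.coe_fn_mk, hj, dite_false]
        exact ⟨_, rfl⟩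
      obtain ⟨b', hsy⟩ := hsy
      rw [hsx, hsy, SimpleGraph.compl_adj]
      simp only [SimpleGraph.sum_adj, ne_eq, reduceCtorEq, not_false_eq_true, true_and]
      simp only [Nat.even_iff, Nat.odd_iff]
      constructor
      · intro _
        omega
      · intro _
        simp
    · -- i last, j old
      have him : i.val = m := by omega
      have hsy : splitLast α m ⟨j, b⟩ = Sum.inl ⟨⟨j.val, hj⟩, b⟩ := by simp [splitLast, hj]
      have hsx : ∃ a', splitLast α m ⟨i, a⟩ = Sum.inr a' := by
        simp only [splitLast, Equiv.coe_fn_mk, hi, dite_false]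
        exact ⟨_, rfl⟩
      obtain ⟨a', hsx⟩ := hsx
      rw [hsx, hsy, SimpleGraph.compl_adj]
      simp only [SimpleGraph.sum_adj, ne_eq, reduceCtorEq, not_false_eq_true, true_and]
      simp only [Nat.even_iff, Nat.odd_iff]
      constructor
      · intro _
        omega
      · intro _
        simp
    · -- both last
      have him : i.val = m := by omega
      have hjm : j.val = m := by omega
      have hsx : splitLast α m ⟨i, a⟩ = Sum.inr (Fin.cast (by rw [him]) a) := by
        simp only [splitLast, Equiv.coe_fn_mk, hi, dite_false]
      have hsy : splitLast α m ⟨j, b⟩ = Sum.inr (Fin.cast (by rw [hjm]) b) := by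
        simp only [splitLast, Equiv.coe_fn_mk, hj, dite_false]
      rw [hsx, hsy, SimpleGraph.compl_adj]
      simp only [SimpleGraph.sum_adj, SimpleGraph.top_adj, ne_eq, Sum.inr.injEq]
      constructor
      · rintro ⟨h1, h2⟩
        exact absurd (not_not.mp h2) h1
      · rintro (⟨-, -, hev⟩ | ⟨hne, -⟩)
        · rw [him] at hev
          simp [Nat.even_iff] at hev
          omega
        · omega

section Helpers
variable {n : Type*} [Fintype n] [DecidableEq n] {R : Type*} [CommRing R]

lemma charmatrix_eq (M : Matrix n n R) :
    Matrix.charmatrix M = (Polynomial.X : Polynomial R) • (1 : Matrix n n (Polynomial R)) -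
      M.map Polynomial.C := by
  ext i j
  by_cases h : i = j
  · subst h
    simp [Matrix.charmatrix_apply_eq, Matrix.one_apply, Matrix.map_apply]
  · simp [Matrix.charmatrix_apply_ne _ _ _ h, Matrix.one_apply_ne h, Matrix.map_apply]

lemma charpoly_conj (P P' M : Matrix n n R) (h1 : P * P' = 1) (h2 : P' * P = 1) :
    (P * M * P').charpoly = M.charpoly := by
  have hmap : ∀ (A B : Matrix n n R),
      (A * B).map (Polynomial.C : R →+* Polynomial R) = A.map Polynomial.C * B.map Polynomial.C :=
    fun A B => Matrix.map_mul
  have key : Matrix.charmatrix (P * M * P') =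
      P.map Polynomial.C * Matrix.charmatrix M * P'.map Polynomial.C := by
    rw [charmatrix_eq, charmatrix_eq, Matrix.mul_sub, Matrix.sub_mul]
    congr 1
    · rw [Matrix.mul_smul, Matrix.mul_one, Matrix.smul_mul, ← hmap, h1, Matrix.map_one _ (by simp) (by simp)]
    · rw [← hmap, ← hmap]
  unfold Matrix.charpoly
  rw [key, Matrix.det_mul, Matrix.det_mul]
  have : (P.map (Polynomial.C : R →+* Polynomial R)).det * (P'.map Polynomial.C).det = 1 := by
    rw [← Matrix.det_mul, ← hmap, h1, Matrix.map_one _ (by simp) (by simp), Matrix.det_one]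
  calc (P.map Polynomial.C).det * (Matrix.charmatrix M).det * (P'.map Polynomial.C).det
      = (Matrix.charmatrix M).det *
        ((P.map Polynomial.C).det * (P'.map Polynomial.C).det) := by ring
    _ = (Matrix.charmatrix M).det := by rw [this, mul_one]

lemma charpoly_transpose (M : Matrix n n R) : M.transpose.charpoly = M.charpoly := by
  unfold Matrix.charpoly
  have : Matrix.charmatrix M.transpose = (Matrix.charmatrix M).transpose := by
    ext i j
    by_cases h : i = j
    · subst h
      simp
    · simp [Matrix.charmatrix_apply_ne _ _ _ h,
        Matrix.charmatrix_apply_ne _ _ _ (Ne.symm h), Matrix.transpose_apply]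
  rw [this, Matrix.det_transpose]

lemma charpoly_diagonal (d : n → R) :
    (Matrix.diagonal d).charpoly = ∏ i : n, (Polynomial.X - Polynomial.C (d i)) := by
  unfold Matrix.charpoly
  have : Matrix.charmatrix (Matrix.diagonal d) =
      Matrix.diagonal (fun i => Polynomial.X - Polynomial.C (d i)) := by
    ext i j
    by_cases h : i = j
    · subst h
      simp
    · simp [Matrix.charmatrix_apply_ne _ _ _ h, Matrix.diagonal_apply_ne _ h]
  rw [this, Matrix.det_diagonal]

end Helpers

/-- Splitting each cell into its first element and the rest. -/
def cellSplit (α : ℕ → ℕ) (n : ℕ) (hα : ∀ i < n, 0 < α i) :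
    (Σ j : Fin n, Fin (α j.val)) ≃ (Fin n ⊕ Σ j : Fin n, Fin (α j.val - 1)) where
  toFun x := if h : x.2.val = 0 then Sum.inl x.1
    else Sum.inr ⟨x.1, ⟨x.2.val - 1, by have := x.2.isLt; omega⟩⟩
  invFun y := match y with
    | Sum.inl j => ⟨j, ⟨0, hα j.val j.isLt⟩⟩
    | Sum.inr w => ⟨w.1, ⟨w.2.val + 1, by have := w.2.isLt; omega⟩⟩
  left_inv := by
    rintro ⟨j, a⟩
    dsimp only
    by_cases h : a.val = 0
    · rw [dif_pos h]
      exact congrArg (Sigma.mk j) (Fin.ext h.symm)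
    · rw [dif_neg h]
      exact congrArg (Sigma.mk j) (Fin.ext (show a.val - 1 + 1 = a.val by omega))
  right_inv := by
    rintro (j | w)
    · simp
    · dsimp only
      rw [dif_neg (by simp)]
      exact congrArg Sum.inr (congrArg (Sigma.mk w.1) (Fin.ext (by simp)))

/-- The entry pattern of the adjacency matrix of the C-graph `C(α 0,…,α (2k-1))` between
vertices in cells `i` and `j` (distinct vertices). -/
noncomputable def gEnt : ℕ → ℕ → ℝ := fun i j =>
  if i = j then (if Even i then 1 else 0) else if Odd (max i j) then 1 else 0

/-- The reindexed adjacency matrix. -/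
noncomputable def tilA (α : ℕ → ℕ) (k : ℕ) :
    Matrix (Fin (2*k) ⊕ Σ j : Fin (2*k), Fin (α j.val - 1))
      (Fin (2*k) ⊕ Σ j : Fin (2*k), Fin (α j.val - 1)) ℝ :=
  Matrix.of fun u v => match u, v with
  | Sum.inl i, Sum.inl j => if i = j then 0 else gEnt i.val j.val
  | Sum.inl i, Sum.inr w => gEnt i.val w.1.val
  | Sum.inr w, Sum.inl j => gEnt w.1.val j.val
  | Sum.inr w, Sum.inr w' =>
      if w.1 = w'.1 ∧ w.2.val = w'.2.val then 0 else gEnt w.1.val w'.1.val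

/-- The nilpotent change-of-basis matrix. -/
noncomputable def NM (α : ℕ → ℕ) (k : ℕ) :
    Matrix (Fin (2*k) ⊕ Σ j : Fin (2*k), Fin (α j.val - 1))
      (Fin (2*k) ⊕ Σ j : Fin (2*k), Fin (α j.val - 1)) ℝ :=
  Matrix.of fun u v => match u, v with
  | Sum.inl i, Sum.inr w => if i = w.1 then (-1 : ℝ) else 0
  | _, _ => 0

section MulLemmas
variable {α : ℕ → ℕ} {k : ℕ}

lemma mul_NM_inl (X : Matrix (Fin (2*k) ⊕ Σ j : Fin (2*k), Fin (α j.val - 1))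
    (Fin (2*k) ⊕ Σ j : Fin (2*k), Fin (α j.val - 1)) ℝ) (u) (j : Fin (2*k)) :
    (X * NM α k) u (Sum.inl j) = 0 := by
  rw [Matrix.mul_apply]
  apply Finset.sum_eq_zero
  rintro (i | w) _ <;> simp [NM]

lemma mul_NM_inr (X : Matrix (Fin (2*k) ⊕ Σ j : Fin (2*k), Fin (α j.val - 1))
    (Fin (2*k) ⊕ Σ j : Fin (2*k), Fin (α j.val - 1)) ℝ) (u)
    (w : Σ j : Fin (2*k), Fin (α j.val - 1)) :
    (X * NM α k) u (Sum.inr w) = -X u (Sum.inl w.1) := by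
  rw [Matrix.mul_apply, Fintype.sum_sum_type]
  have h2 : ∑ w' : Σ j : Fin (2*k), Fin (α j.val - 1),
      X u (Sum.inr w') * NM α k (Sum.inr w') (Sum.inr w) = 0 := by
    apply Finset.sum_eq_zero
    intro w' _
    simp [NM]
  rw [h2, add_zero]
  simp only [NM, Matrix.of_apply, mul_ite, mul_neg, mul_one, mul_zero]
  simp [Finset.sum_ite_eq']

lemma NM_mul_inl (X : Matrix (Fin (2*k) ⊕ Σ j : Fin (2*k), Fin (α j.val - 1))
    (Fin (2*k) ⊕ Σ j : Fin (2*k), Fin (α j.val - 1)) ℝ) (i : Fin (2*k)) (v) :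
    (NM α k * X) (Sum.inl i) v = -∑ b : Fin (α i.val - 1), X (Sum.inr ⟨i, b⟩) v := by
  rw [Matrix.mul_apply, Fintype.sum_sum_type]
  have h1 : ∑ i' : Fin (2*k), NM α k (Sum.inl i) (Sum.inl i') * X (Sum.inl i') v = 0 := by
    apply Finset.sum_eq_zero
    intro i' _
    simp [NM]
  rw [h1, zero_add, ← Finset.univ_sigma_univ, Finset.sum_sigma]
  simp only [NM, Matrix.of_apply, ite_mul, neg_mul, one_mul, zero_mul]
  rw [Finset.sum_eq_single i]
  · simp
  · intro j _ hj
    apply Finset.sum_eq_zero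
    intro b _
    rw [if_neg (Ne.symm hj)]
  · intro h
    exact absurd (Finset.mem_univ i) h

lemma NM_mul_inr (X : Matrix (Fin (2*k) ⊕ Σ j : Fin (2*k), Fin (α j.val - 1))
    (Fin (2*k) ⊕ Σ j : Fin (2*k), Fin (α j.val - 1)) ℝ)
    (w : Σ j : Fin (2*k), Fin (α j.val - 1)) (v) :
    (NM α k * X) (Sum.inr w) v = 0 := by
  rw [Matrix.mul_apply]
  apply Finset.sum_eq_zero
  rintro (i | w') _ <;> simp [NM]

lemma NM_unit_left : (1 - NM α k) * (1 + NM α k) = 1 := by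
  have hNN : NM α k * NM α k = 0 := by
    ext u v
    rcases u with i | w
    · rw [NM_mul_inl]
      simp only [Matrix.zero_apply]
      rw [neg_eq_zero]
      apply Finset.sum_eq_zero
      intro b _
      rcases v with j | w' <;> simp [NM]
    · rw [NM_mul_inr]
      simp
  have : (1 - NM α k) * (1 + NM α k) = 1 - NM α k * NM α k := by noncomm_ring
  rw [this, hNN, sub_zero]

lemma NM_unit_right : (1 + NM α k) * (1 - NM α k) = 1 := by
  have hNN : NM α k * NM α k = 0 := by
    ext u v
    rcases u with i | w
    · rw [NM_mul_inl]
      simp only [Matrix.zero_apply]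
      rw [neg_eq_zero]
      apply Finset.sum_eq_zero
      intro b _
      rcases v with j | w' <;> simp [NM]
    · rw [NM_mul_inr]
      simp
  have : (1 + NM α k) * (1 - NM α k) = 1 - NM α k * NM α k := by noncomm_ring
  rw [this, hNN, sub_zero]

end MulLemmas

section Reindex
variable {α : ℕ → ℕ} {k : ℕ}

lemma adjMat_apply {V : Type*} [Fintype V] (G : SimpleGraph V) (u v : V) :
    adjMat G u v = if G.Adj u v then (1 : ℝ) else 0 := rfl

lemma cellSplit_symm_inl {n : ℕ} (hα : ∀ i < n, 0 < α i) (j : Fin n) :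
    (cellSplit α n hα).symm (Sum.inl j) = ⟨j, ⟨0, hα j.val j.isLt⟩⟩ := rfl

lemma cellSplit_symm_inr {n : ℕ} (hα : ∀ i < n, 0 < α i)
    (w : Σ j : Fin n, Fin (α j.val - 1)) :
    (cellSplit α n hα).symm (Sum.inr w) =
      ⟨w.1, ⟨w.2.val + 1, by have := w.2.isLt; omega⟩⟩ := rfl

lemma tilA_inl_inl (i j : Fin (2*k)) :
    tilA α k (Sum.inl i) (Sum.inl j) =
      if i.val ≠ j.val ∧ Odd (max i.val j.val) then (1:ℝ) else 0 := by
  simp only [tilA, Matrix.of_apply, gEnt]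
  by_cases h : i = j
  · subst h
    simp
  · have hv : i.val ≠ j.val := fun hh => h (Fin.ext hh)
    by_cases ho : Odd (max i.val j.val) <;> simp [h, hv, ho]

lemma tilA_inl_inr (i : Fin (2*k)) (w : Σ j : Fin (2*k), Fin (α j.val - 1)) :
    tilA α k (Sum.inl i) (Sum.inr w) =
      if (i.val = w.1.val ∧ Even i.val) ∨ (i.val ≠ w.1.val ∧ Odd (max i.val w.1.val))
        then (1:ℝ) else 0 := by
  simp only [tilA, Matrix.of_apply, gEnt]
  by_cases h : i.val = w.1.val
  · by_cases he : Even i.val <;> simp [h, he]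
  · by_cases ho : Odd (max i.val w.1.val) <;> simp [h, ho]

lemma tilA_inr_inl (w : Σ j : Fin (2*k), Fin (α j.val - 1)) (j : Fin (2*k)) :
    tilA α k (Sum.inr w) (Sum.inl j) =
      if (w.1.val = j.val ∧ Even w.1.val) ∨ (w.1.val ≠ j.val ∧ Odd (max w.1.val j.val))
        then (1:ℝ) else 0 := by
  simp only [tilA, Matrix.of_apply, gEnt]
  by_cases h : w.1.val = j.val
  · by_cases he : Even w.1.val <;> simp [h, he]
  · by_cases ho : Odd (max w.1.val j.val) <;> simp [h, ho]

lemma tilA_inr_inr (w w' : Σ j : Fin (2*k), Fin (α j.val - 1)) :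
    tilA α k (Sum.inr w) (Sum.inr w') =
      if ¬(w.1.val = w'.1.val ∧ w.2.val = w'.2.val) ∧
          ((w.1.val = w'.1.val ∧ Even w.1.val) ∨
            (w.1.val ≠ w'.1.val ∧ Odd (max w.1.val w'.1.val)))
        then (1:ℝ) else 0 := by
  simp only [tilA, Matrix.of_apply, gEnt]
  have hfe : (w.1 = w'.1) ↔ w.1.val = w'.1.val := Fin.ext_iff
  by_cases h : w.1.val = w'.1.val
  · by_cases h2 : w.2.val = w'.2.val
    · simp [hfe.mpr h, h, h2]
    · by_cases he : Even w.1.val <;> simp [hfe.mpr h, h, h2, he]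
  · have : ¬ (w.1 = w'.1) := fun hh => h (by rw [hh])
    by_cases ho : Odd (max w.1.val w'.1.val) <;> simp [this, h, ho]

lemma tilA_eq (hα : ∀ i < 2*k, 0 < α i) :
    Matrix.reindex (cellSplit α (2*k) hα) (cellSplit α (2*k) hα)
      (adjMat (cographC α (2*k))) = tilA α k := by
  ext u v
  rw [Matrix.reindex_apply, Matrix.submatrix_apply]
  rcases u with i | w <;> rcases v with j | w'
  · rw [cellSplit_symm_inl, cellSplit_symm_inl, adjMat_apply, cographC_adj, tilA_inl_inl]
    congr! 1
    simp [Nat.even_iff, Nat.odd_iff]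
  · rw [cellSplit_symm_inl, cellSplit_symm_inr, adjMat_apply, cographC_adj, tilA_inl_inr]
    congr! 1
    simp [Nat.even_iff, Nat.odd_iff]
  · rw [cellSplit_symm_inr, cellSplit_symm_inl, adjMat_apply, cographC_adj, tilA_inr_inl]
    congr! 1
    simp [Nat.even_iff, Nat.odd_iff]
  · rw [cellSplit_symm_inr, cellSplit_symm_inr, adjMat_apply, cographC_adj, tilA_inr_inr]
    congr! 1
    simp [Nat.even_iff, Nat.odd_iff]
    omega

end Reindex

section Primed
variable {α : ℕ → ℕ} {k : ℕ}

lemma tilA_inr_inl' (i j : Fin (2*k)) (b : Fin (α i.val - 1)) :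
    tilA α k (Sum.inr ⟨i, b⟩) (Sum.inl j) =
      if (i.val = j.val ∧ Even i.val) ∨ (i.val ≠ j.val ∧ Odd (max i.val j.val))
        then (1:ℝ) else 0 :=
  tilA_inr_inl ⟨i, b⟩ j

lemma tilA_inl_inr' (i j : Fin (2*k)) (b : Fin (α j.val - 1)) :
    tilA α k (Sum.inl i) (Sum.inr ⟨j, b⟩) =
      if (i.val = j.val ∧ Even i.val) ∨ (i.val ≠ j.val ∧ Odd (max i.val j.val))
        then (1:ℝ) else 0 :=
  tilA_inl_inr i ⟨j, b⟩

lemma tilA_inr_inr' (i j : Fin (2*k)) (a : Fin (α i.val - 1)) (b : Fin (α j.val - 1)) :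
    tilA α k (Sum.inr ⟨i, a⟩) (Sum.inr ⟨j, b⟩) =
      if ¬(i.val = j.val ∧ a.val = b.val) ∧
          ((i.val = j.val ∧ Even i.val) ∨ (i.val ≠ j.val ∧ Odd (max i.val j.val)))
        then (1:ℝ) else 0 :=
  tilA_inr_inr ⟨i, a⟩ ⟨j, b⟩

end Primed

noncomputable def CM (α : ℕ → ℕ) (k : ℕ) :
    Matrix (Σ j : Fin (2*k), Fin (α j.val - 1)) (Fin (2*k)) ℝ :=
  Matrix.of fun w j =>
    if (w.1.val = j.val ∧ Even w.1.val) ∨ (w.1.val ≠ j.val ∧ Odd (max w.1.val j.val))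
      then (1:ℝ) else 0

noncomputable def DM (α : ℕ → ℕ) (k : ℕ) :
    Matrix (Σ j : Fin (2*k), Fin (α j.val - 1)) (Σ j : Fin (2*k), Fin (α j.val - 1)) ℝ :=
  Matrix.diagonal (fun w => if Even w.1.val then (-1:ℝ) else 0)

lemma key_eq (α : ℕ → ℕ) (k : ℕ) (hα : ∀ i < 2*k, 0 < α i) :
    (1 - NM α k) * tilA α k * (1 + NM α k) =
      Matrix.fromBlocks (quotientMatrix α k)ᵀ 0 (CM α k) (DM α k) := by
  have hexp : (1 - NM α k) * tilA α k * (1 + NM α k) =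
      tilA α k + tilA α k * NM α k - NM α k * tilA α k - NM α k * (tilA α k * NM α k) := by
    noncomm_ring
  rw [hexp]
  ext u v
  rcases u with i | w <;> rcases v with j | w'
  · -- Q-block
    have hcast : ((α i.val - 1 : ℕ) : ℝ) = (α i.val : ℝ) - 1 := by
      rw [Nat.cast_sub (hα i.val i.isLt), Nat.cast_one]
    simp only [Matrix.sub_apply, Matrix.add_apply, Matrix.fromBlocks_apply₁₁,
      Matrix.transpose_apply, mul_NM_inl, NM_mul_inl, tilA_inl_inl, tilA_inr_inl',
      quotientMatrix, Matrix.of_apply]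
    by_cases hij : i = j
    · subst hij
      by_cases hev : Even i.val
      · have h1 : Odd (i.val + 1) := Even.add_one hev
        simp [hev, h1, hcast]
      · have h1 : ¬ Odd (i.val + 1) := by
          simp only [Nat.odd_iff]
          simp only [Nat.even_iff] at hev
          omega
        simp [hev, h1]
    · have hv : i.val ≠ j.val := fun h => hij (Fin.ext h)
      have hji : ¬ j = i := fun h => hij h.symm
      by_cases ho : Odd (max i.val j.val)
      · have hcond : (Even (j.val+1) ∧ i.val < j.val) ∨ (Even (i.val+1) ∧ j.val < i.val) := by
          simp only [Nat.even_iff]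
          simp only [Nat.odd_iff] at ho
          omega
        rw [if_neg hji, if_pos hcond]
        simp [hv, ho, hcast]
      · have hcond : ¬ ((Even (j.val+1) ∧ i.val < j.val) ∨ (Even (i.val+1) ∧ j.val < i.val)) := by
          simp only [Nat.even_iff]
          simp only [Nat.odd_iff] at ho
          omega
        rw [if_neg hji, if_neg hcond]
        simp [hv, ho]
  · -- zero block
    obtain ⟨j, b'⟩ := w'
    simp only [Matrix.sub_apply, Matrix.add_apply, Matrix.fromBlocks_apply₁₂, Matrix.zero_apply,
      mul_NM_inr, NM_mul_inl, tilA_inl_inr', tilA_inl_inl]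
    simp only [mul_NM_inr, tilA_inr_inr', tilA_inr_inl']
    by_cases hij : i = j
    · subst hij
      by_cases hev : Even i.val
      · have hs1 : ∀ b : Fin (α i.val - 1),
            (if ¬(i.val = i.val ∧ b.val = b'.val) ∧
                ((i.val = i.val ∧ Even i.val) ∨ (i.val ≠ i.val ∧ Odd (max i.val i.val)))
              then (1:ℝ) else 0) = 1 - (if b = b' then 1 else 0) := by
          intro b
          by_cases hb : b = b'
          · subst hb
            rw [if_neg (by simp), if_pos rfl]
            norm_num
          · have hbv : ¬ b.val = b'.val := fun h => hb (Fin.ext h)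
            rw [if_pos ⟨by simp [hbv], Or.inl ⟨rfl, hev⟩⟩, if_neg hb]
            norm_num
        rw [Finset.sum_congr rfl (fun b _ => hs1 b), Finset.sum_sub_distrib, Finset.sum_const,
          Finset.card_univ, Fintype.card_fin, Finset.sum_ite_eq' Finset.univ b' (fun _ => (1:ℝ))]
        simp [hev]
      · simp [hev]
    · have hv : i.val ≠ j.val := fun h => hij (Fin.ext h)
      by_cases ho : Odd (max i.val j.val)
      · simp [hv, ho]
      · simp [hv, ho]
  · -- C block
    simp only [Matrix.sub_apply, Matrix.add_apply, Matrix.fromBlocks_apply₂₁,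
      mul_NM_inl, NM_mul_inr, tilA_inr_inl, CM, Matrix.of_apply]
    simp
  · -- D block
    obtain ⟨i, a⟩ := w
    obtain ⟨j, b'⟩ := w'
    simp only [Matrix.sub_apply, Matrix.add_apply, Matrix.fromBlocks_apply₂₂,
      mul_NM_inr, NM_mul_inr, tilA_inr_inr', tilA_inr_inl', DM]
    by_cases hij : i = j
    · subst hij
      by_cases hab : a.val = b'.val
      · have heq : (⟨i, a⟩ : Σ j : Fin (2*k), Fin (α j.val - 1)) = ⟨i, b'⟩ :=
          (sigma_mk_eq_iff (α := fun t => α t - 1)).mpr ⟨rfl, hab⟩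
        rw [heq, Matrix.diagonal_apply_eq]
        rw [if_neg (by simp [hab])]
        by_cases hev : Even i.val <;> simp [hev]
      · rw [Matrix.diagonal_apply_ne _ (fun hc => hab ((sigma_mk_eq_iff (α := fun t => α t - 1)).mp hc).2)]
        by_cases hev : Even i.val <;> simp [hab, hev]
    · have hv : i.val ≠ j.val := fun h => hij (Fin.ext h)
      rw [Matrix.diagonal_apply_ne _ (fun hc => hv ((sigma_mk_eq_iff (α := fun t => α t - 1)).mp hc).1)]
      by_cases ho : Odd (max i.val j.val) <;> simp [hv, ho]

lemma prod_range_two_mul {M : Type*} [CommMonoid M] (k : ℕ) (f : ℕ → M) :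
    ∏ t ∈ Finset.range (2*k), f t = ∏ i ∈ Finset.range k, (f (2*i) * f (2*i+1)) := by
  induction k with
  | zero => simp
  | succ k ih =>
    have h2 : 2*(k+1) = 2*k + 1 + 1 := by ring
    rw [h2, Finset.prod_range_succ, Finset.prod_range_succ, ih, Finset.prod_range_succ]
    rw [mul_assoc]

lemma DM_charpoly (α : ℕ → ℕ) (k : ℕ) :
    (DM α k).charpoly =
      Polynomial.X ^ (∑ i ∈ Finset.range k, (α (2*i+1) - 1)) *
        (Polynomial.X + 1) ^ (∑ i ∈ Finset.range k, (α (2*i) - 1)) := by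
  rw [DM, _root_.charpoly_diagonal, ← Finset.univ_sigma_univ, Finset.prod_sigma]
  have h1 : ∀ j : Fin (2*k),
      (∏ _b : Fin (α j.val - 1),
        (Polynomial.X - Polynomial.C (if Even j.val then (-1:ℝ) else 0))) =
      (if Even j.val then Polynomial.X + 1 else Polynomial.X) ^ (α j.val - 1) := by
    intro j
    rw [Finset.prod_const, Finset.card_univ, Fintype.card_fin]
    congr 1
    by_cases h : Even j.val <;> simp [h]
  rw [Finset.prod_congr rfl (fun j _ => h1 j)]
  rw [Fin.prod_univ_eq_prod_range
    (fun t => (if Even t then Polynomial.X + 1 else Polynomial.X) ^ (α t - 1)) (2*k)]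
  rw [prod_range_two_mul]
  have h2 : ∀ i : ℕ,
      (if Even (2*i) then (Polynomial.X : Polynomial ℝ) + 1 else Polynomial.X) ^ (α (2*i) - 1) *
        (if Even (2*i+1) then (Polynomial.X : Polynomial ℝ) + 1 else Polynomial.X) ^ (α (2*i+1) - 1)
      = (Polynomial.X + 1) ^ (α (2*i) - 1) * Polynomial.X ^ (α (2*i+1) - 1) := by
    intro i
    rw [if_pos (even_two_mul i), if_neg (by simp [Nat.even_iff])]
  rw [Finset.prod_congr rfl (fun i _ => h2 i), Finset.prod_mul_distrib,
    Finset.prod_pow_eq_pow_sum, Finset.prod_pow_eq_pow_sum]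
  ring


/-- `Ψ(x) = x^{∑ (α_{2i}-1)} (x+1)^{∑ (α_{2i-1}-1)} Ψ_π(x)`, where `Ψ` and
`Ψ_π` are the characteristic polynomials of the adjacency matrix `A` and of the quotient
matrix `Q_π(G)`. -/
theorem stmt18 (k : ℕ) (hk : 1 ≤ k) (α : ℕ → ℕ) (hα : ∀ i < 2 * k, 0 < α i) :
    (adjMat (cographC α (2 * k))).charpoly =
      Polynomial.X ^ (∑ i ∈ Finset.range k, (α (2 * i + 1) - 1)) *
        (Polynomial.X + 1) ^ (∑ i ∈ Finset.range k, (α (2 * i) - 1)) *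
        (quotientMatrix α k).charpoly := by
  rw [← Matrix.charpoly_reindex (cellSplit α (2*k) hα) (adjMat (cographC α (2*k)))]
  rw [tilA_eq hα]
  rw [← charpoly_conj (1 - NM α k) (1 + NM α k) (tilA α k) NM_unit_left NM_unit_right]
  rw [key_eq α k hα, Matrix.charpoly_fromBlocks_zero₁₂, _root_.charpoly_transpose, DM_charpoly]
  ring
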